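/- Let F be a J-frame for a Krein space H with synthesis operator T and J-frame operator S = TT⁺ (where T⁺ is the Krein-space adjoint). Then E := T⁺ S⁻¹ T is the unique J-selfadjoint projection of ℓ²(I) onto N(T)^{[⊥]} = R(T⁺). -/

import Mathlib

noncomputable section

open scoped Classical

open Function

/-- The indefinite inner product `[x,y] = ⟨Jx, y⟩` induced by an operator `J`. -/
def kre {E : Type*} [NormedAddCommGroup E] [InnerProductSpace ℂ E]
    (J : E →L[ℂ] E) (x y : E) : ℂ := @inner ℂ _ _ (J x) y

/-- `J` is a fundamental symmetry: a selfadjoint unitary (involutive) operator. -/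
def IsFundSym {E : Type*} [NormedAddCommGroup E] [InnerProductSpace ℂ E] [CompleteSpace E]
    (J : E →L[ℂ] E) : Prop :=
  IsSelfAdjoint J ∧ J.comp J = ContinuousLinearMap.id ℂ E

/-- The J-orthogonal companion of a subspace. -/
def JorthCompanion {E : Type*} [NormedAddCommGroup E] [InnerProductSpace ℂ E]
    (J : E →L[ℂ] E) (S : Submodule ℂ E) : Submodule ℂ E where
  carrier := {x | ∀ s ∈ S, kre J x s = 0}
  zero_mem' := by intro s hs; simp [kre]
  add_mem' := by
    intro a b ha hb s hs
    have h1 := ha s hs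
    have h2 := hb s hs
    simp only [kre, map_add, inner_add_left] at h1 h2 ⊢
    rw [h1, h2, add_zero]
  smul_mem' := by
    intro c x hx s hs
    have h1 := hx s hs
    simp only [kre, map_smul, inner_smul_left] at h1 ⊢
    rw [h1, mul_zero]

/-- Uniformly J-positive subspace. -/
def UnifJPos {E : Type*} [NormedAddCommGroup E] [InnerProductSpace ℂ E]
    (J : E →L[ℂ] E) (S : Submodule ℂ E) : Prop :=
  ∃ α : ℝ, 0 < α ∧ ∀ x ∈ S, α * ‖x‖ ^ 2 ≤ (kre J x x).re

/-- Uniformly J-negative subspace. -/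
def UnifJNeg {E : Type*} [NormedAddCommGroup E] [InnerProductSpace ℂ E]
    (J : E →L[ℂ] E) (S : Submodule ℂ E) : Prop :=
  ∃ α : ℝ, 0 < α ∧ ∀ x ∈ S, (kre J x x).re ≤ -(α * ‖x‖ ^ 2)

/-- Maximal uniformly J-positive subspace. -/
def MaxUnifJPos {E : Type*} [NormedAddCommGroup E] [InnerProductSpace ℂ E]
    (J : E →L[ℂ] E) (S : Submodule ℂ E) : Prop :=
  UnifJPos J S ∧ ∀ S' : Submodule ℂ E, UnifJPos J S' → S ≤ S' → S' = S

/-- Maximal uniformly J-negative subspace. -/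
def MaxUnifJNeg {E : Type*} [NormedAddCommGroup E] [InnerProductSpace ℂ E]
    (J : E →L[ℂ] E) (S : Submodule ℂ E) : Prop :=
  UnifJNeg J S ∧ ∀ S' : Submodule ℂ E, UnifJNeg J S' → S ≤ S' → S' = S

/-- J-selfadjoint operator (with respect to the indefinite inner product of `J`). -/
def IsJSelfAdj {E : Type*} [NormedAddCommGroup E] [InnerProductSpace ℂ E]
    (J : E →L[ℂ] E) (A : E →L[ℂ] E) : Prop :=
  ∀ x y : E, kre J (A x) y = kre J x (A y)

/-- The J-order: `A ≤_J B` iff `B - A` is J-positive. -/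
def JLe {E : Type*} [NormedAddCommGroup E] [InnerProductSpace ℂ E]
    (J : E →L[ℂ] E) (A B : E →L[ℂ] E) : Prop :=
  ∀ x : E, 0 ≤ (kre J (B x - A x) x).re ∧ (kre J (B x - A x) x).im = 0

/-- The subspace of `ℓ²(I)` supported on a subset (given by a predicate) of `I`. -/
def suppSub {I : Type*} (A : I → Prop) : Submodule ℂ (lp (fun _ : I => ℂ) 2) where
  carrier := {x | ∀ i, ¬ A i → x i = 0}
  zero_mem' := by intro i _; rfl
  add_mem' := by
    intro a b ha hb i hi
    have : (↑(a + b) : ∀ i, ℂ) i = a i + b i := by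
      rw [lp.coeFn_add]; rfl
    simp [this, ha i hi, hb i hi]
  smul_mem' := by
    intro c x hx i hi
    have : (↑(c • x) : ∀ i, ℂ) i = c • x i := by
      rw [lp.coeFn_smul]; rfl
    simp [this, hx i hi]

variable {H : Type*} [NormedAddCommGroup H] [InnerProductSpace ℂ H] [CompleteSpace H]
variable {I : Type*} [DecidableEq I]

/-- `i` is a "positive index" for the family `f` w.r.t. `J`: `[f i, f i] ≥ 0`. -/
def posIdx {H : Type*} [NormedAddCommGroup H] [InnerProductSpace ℂ H]
    (J : H →L[ℂ] H) (f : I → H) (i : I) : Prop := 0 ≤ (kre J (f i) (f i)).re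

/-- The sign `σ_i = sgn [f i, f i]` (as a complex scalar, `+1` on `I₊` and `-1` on `I₋`). -/
def sgnv {H : Type*} [NormedAddCommGroup H] [InnerProductSpace ℂ H]
    (J : H →L[ℂ] H) (f : I → H) (i : I) : ℂ := if posIdx J f i then 1 else -1

/-- Closure of the span of the vectors of the family `h` with positive indices (signs taken
from the family `f`). -/
def posSpan {H : Type*} [NormedAddCommGroup H] [InnerProductSpace ℂ H]
    (J : H →L[ℂ] H) (f h : I → H) : Submodule ℂ H :=
  (Submodule.span ℂ {x | ∃ i, posIdx J f i ∧ h i = x}).topologicalClosure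

/-- Closure of the span of the vectors of the family `h` with negative indices. -/
def negSpan {H : Type*} [NormedAddCommGroup H] [InnerProductSpace ℂ H]
    (J : H →L[ℂ] H) (f h : I → H) : Submodule ℂ H :=
  (Submodule.span ℂ {x | ∃ i, ¬ posIdx J f i ∧ h i = x}).topologicalClosure

/-- A Bessel family in a Hilbert space. -/
def IsBessel {H : Type*} [NormedAddCommGroup H] [InnerProductSpace ℂ H]
    (g : I → H) : Prop :=
  ∃ β : ℝ, ∀ (x : H) (s : Finset I),
    ∑ i ∈ s, ‖@inner ℂ _ _ (g i) x‖ ^ 2 ≤ β * ‖x‖ ^ 2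

/-- `g` is a dual family for `f`: the signs coincide and the two indefinite
reconstruction formulas hold. -/
def IsDualFamily {H : Type*} [NormedAddCommGroup H] [InnerProductSpace ℂ H]
    (J : H →L[ℂ] H) (f g : I → H) : Prop :=
  (∀ i, Real.sign ((kre J (g i) (g i)).re) = Real.sign ((kre J (f i) (f i)).re)) ∧
  (∀ x : H, HasSum (fun i => (sgnv J f i * kre J x (f i)) • g i) x) ∧
  (∀ x : H, HasSum (fun i => (sgnv J f i * kre J x (g i)) • f i) x)


/-- `E = T⁺ S⁻¹ T` is the unique J-selfadjoint projection onto
`N(T)^[⊥] = R(T⁺)`. -/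
theorem jframe_jselfadjoint_projection
    (J : H →L[ℂ] H) (hJ : IsFundSym J) (f : I → H)
    (T : lp (fun _ : I => ℂ) 2 →L[ℂ] H)
    (hT : ∀ i, T (lp.single 2 i (1:ℂ)) = f i)
    (hTsurj : Function.Surjective T)
    (Pp Pm : lp (fun _ : I => ℂ) 2 →L[ℂ] lp (fun _ : I => ℂ) 2)
    (hPp : ∀ (x : lp (fun _ : I => ℂ) 2) (i : I), Pp x i = if posIdx J f i then x i else 0)
    (hPm : ∀ (x : lp (fun _ : I => ℂ) 2) (i : I), Pm x i = if posIdx J f i then 0 else x i)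
    (hJF : MaxUnifJPos J (LinearMap.range ((T.comp Pp : lp (fun _ : I => ℂ) 2 →L[ℂ] H) : lp (fun _ : I => ℂ) 2 →ₗ[ℂ] H)) ∧
      MaxUnifJNeg J (LinearMap.range ((T.comp Pm : lp (fun _ : I => ℂ) 2 →L[ℂ] H) : lp (fun _ : I => ℂ) 2 →ₗ[ℂ] H)))
    (Tp : H →L[ℂ] lp (fun _ : I => ℂ) 2)
    (hTp : ∀ (x : lp (fun _ : I => ℂ) 2) (y : H), kre J (T x) y = kre (Pp - Pm) x (Tp y))
    (Sinv : H →L[ℂ] H)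
    (hS1 : (T.comp Tp).comp Sinv = ContinuousLinearMap.id ℂ H)
    (hS2 : Sinv.comp (T.comp Tp) = ContinuousLinearMap.id ℂ H) :
    (Tp.comp (Sinv.comp T)).comp (Tp.comp (Sinv.comp T)) = Tp.comp (Sinv.comp T) ∧
      IsJSelfAdj (Pp - Pm) (Tp.comp (Sinv.comp T)) ∧
      LinearMap.range ((Tp.comp (Sinv.comp T) : lp (fun _ : I => ℂ) 2 →L[ℂ] lp (fun _ : I => ℂ) 2) : lp (fun _ : I => ℂ) 2 →ₗ[ℂ] lp (fun _ : I => ℂ) 2) =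
        JorthCompanion (Pp - Pm) (LinearMap.ker (T : lp (fun _ : I => ℂ) 2 →ₗ[ℂ] H)) ∧
      LinearMap.range ((Tp.comp (Sinv.comp T) : lp (fun _ : I => ℂ) 2 →L[ℂ] lp (fun _ : I => ℂ) 2) : lp (fun _ : I => ℂ) 2 →ₗ[ℂ] lp (fun _ : I => ℂ) 2) = LinearMap.range (Tp : H →ₗ[ℂ] lp (fun _ : I => ℂ) 2) ∧
      ∀ E' : lp (fun _ : I => ℂ) 2 →L[ℂ] lp (fun _ : I => ℂ) 2, E'.comp E' = E' → IsJSelfAdj (Pp - Pm) E' →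
        LinearMap.range (E' : lp (fun _ : I => ℂ) 2 →ₗ[ℂ] lp (fun _ : I => ℂ) 2) = JorthCompanion (Pp - Pm) (LinearMap.ker (T : lp (fun _ : I => ℂ) 2 →ₗ[ℂ] H)) →
          E' = Tp.comp (Sinv.comp T) := by
  classical
  set E := Tp.comp (Sinv.comp T) with hEdef
  have hEapp : ∀ x, E x = Tp (Sinv (T x)) := fun x => rfl
  -- fundamental symmetry J₂ applied pointwise
  have hJ2apply : ∀ (x : lp (fun _ : I => ℂ) 2) (i : I),
      ((Pp - Pm) x) i = (if posIdx J f i then x i else -x i) := by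
    intro x i
    have h1 : ((Pp - Pm) x : ∀ i, ℂ) i = Pp x i - Pm x i := by
      rw [ContinuousLinearMap.sub_apply, lp.coeFn_sub]; rfl
    rw [h1, hPp, hPm]
    split <;> simp
  -- J₂ is selfadjoint
  have hJ2sa : ∀ a b : lp (fun _ : I => ℂ) 2,
      (inner ℂ ((Pp - Pm) a) b : ℂ) = inner ℂ a ((Pp - Pm) b) := by
    intro a b
    rw [lp.inner_eq_tsum, lp.inner_eq_tsum]
    refine tsum_congr fun i => ?_
    rw [hJ2apply, hJ2apply]
    by_cases h : posIdx J f i <;> simp [h, inner_neg_left, inner_neg_right]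
  -- conjugate symmetry of kre J₂
  have hconj2 : ∀ a b : lp (fun _ : I => ℂ) 2,
      kre (Pp - Pm) a b = starRingEnd ℂ (kre (Pp - Pm) b a) := by
    intro a b
    unfold kre
    rw [inner_conj_symm, hJ2sa]
  -- J is selfadjoint
  have hJsa : ∀ x y : H, (inner ℂ (J x) y : ℂ) = inner ℂ x (J y) := by
    intro x y
    have h1 : star J = J := hJ.1
    rw [ContinuousLinearMap.star_eq_adjoint] at h1
    conv_lhs => rw [← h1]
    rw [ContinuousLinearMap.adjoint_inner_left]
  have hconjJ : ∀ a b : H, kre J a b = starRingEnd ℂ (kre J b a) := by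
    intro a b
    unfold kre
    rw [inner_conj_symm, hJsa]
  -- pointwise versions of hS1 hS2
  have hs1 : ∀ y : H, T (Tp (Sinv y)) = y := fun y => congrArg (· y) hS1
  have hs2 : ∀ y : H, Sinv (T (Tp y)) = y := fun y => congrArg (· y) hS2
  -- S = T ∘ Tp is J-selfadjoint, hence Sinv is
  have hSsa : ∀ u v : H, kre J (T (Tp u)) v = kre J u (T (Tp v)) := by
    intro u v
    rw [hTp, hconjJ u (T (Tp v)), hTp, ← hconj2]
  have hSinvsa : ∀ u v : H, kre J (Sinv u) v = kre J u (Sinv v) := by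
    intro u v
    conv_lhs => rw [← hs1 v]
    rw [← hSsa, hs1]
  -- E is idempotent
  have hidem : E.comp E = E := by
    ext x
    simp only [ContinuousLinearMap.comp_apply, hEapp, hs2]
  -- E is J₂-selfadjoint
  have hEsa : IsJSelfAdj (Pp - Pm) E := by
    intro x y
    rw [hconj2, hEapp, ← hTp, ← hSinvsa, ← hconjJ, hTp, hEapp]
  -- nondegeneracy of kre J₂
  have hnd : ∀ u : lp (fun _ : I => ℂ) 2, (∀ z, kre (Pp - Pm) u z = 0) → u = 0 := by
    intro u hu
    have h0 : (Pp - Pm) u = 0 := by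
      have := hu ((Pp - Pm) u)
      unfold kre at this
      exact inner_self_eq_zero.mp this
    apply lp.ext
    funext i
    have h1 : ((Pp - Pm) u) i = 0 := by rw [h0]; rfl
    rw [hJ2apply] at h1
    have h2 : (0 : lp (fun _ : I => ℂ) 2) i = 0 := rfl
    rw [h2]
    by_cases h : posIdx J f i
    · rwa [if_pos h] at h1
    · rw [if_neg h] at h1; exact neg_eq_zero.mp h1
  -- elements of ker T are kre-orthogonal to range Tp
  have hkerTp : ∀ k : lp (fun _ : I => ℂ) 2, T k = 0 → ∀ y : H, kre (Pp - Pm) k (Tp y) = 0 := by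
    intro k hk y
    rw [← hTp, hk]
    unfold kre
    simp
  have hTpfix : ∀ y : H, E (Tp y) = Tp y := by
    intro y; rw [hEapp, hs2]
  have hEker : ∀ x, T (x - E x) = 0 := by
    intro x
    rw [map_sub, hEapp, hs1, sub_self]
  -- range E = range Tp
  have hrange : LinearMap.range (E : lp (fun _ : I => ℂ) 2 →ₗ[ℂ] lp (fun _ : I => ℂ) 2) = LinearMap.range (Tp : H →ₗ[ℂ] lp (fun _ : I => ℂ) 2) := by
    apply le_antisymm
    · rintro _ ⟨x, rfl⟩
      exact ⟨Sinv (T x), rfl⟩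
    · rintro _ ⟨y, rfl⟩
      exact ⟨Tp y, hTpfix y⟩
  -- range Tp ⊆ companion
  have hsub : ∀ y : H, ∀ s ∈ LinearMap.ker (T : lp (fun _ : I => ℂ) 2 →ₗ[ℂ] H), kre (Pp - Pm) (Tp y) s = 0 := by
    intro y s hs
    rw [hconj2, hkerTp s hs, map_zero]
  -- companion ⊆ range E
  have hsup : ∀ x : lp (fun _ : I => ℂ) 2,
      (∀ s ∈ LinearMap.ker (T : lp (fun _ : I => ℂ) 2 →ₗ[ℂ] H), kre (Pp - Pm) x s = 0) → E x = x := by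
    intro x hx
    have hk : ∀ z, kre (Pp - Pm) (x - E x) z = 0 := by
      intro z
      have hz : z = (z - E z) + E z := by abel
      have hz1 : kre (Pp - Pm) (x - E x) (z - E z) = 0 := by
        have ha : kre (Pp - Pm) x (z - E z) = 0 := hx _ (hEker z)
        have hb : kre (Pp - Pm) (E x) (z - E z) = 0 := by
          have hb0 : kre (Pp - Pm) (z - E z) (E x) = 0 := hkerTp _ (hEker z) (Sinv (T x))
          rw [hconj2, hb0, map_zero]
        unfold kre at ha hb ⊢
        rw [map_sub, inner_sub_left, ha, hb, sub_zero]
      have hz2 : kre (Pp - Pm) (x - E x) (E z) = 0 := by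
        rw [hEapp]
        exact hkerTp _ (hEker x) _
      calc kre (Pp - Pm) (x - E x) z
          = kre (Pp - Pm) (x - E x) ((z - E z) + E z) := by rw [← hz]
        _ = kre (Pp - Pm) (x - E x) (z - E z) + kre (Pp - Pm) (x - E x) (E z) := by
            unfold kre; rw [inner_add_right]
        _ = 0 := by rw [hz1, hz2, add_zero]
    have := hnd _ hk
    have h := sub_eq_zero.mp this
    exact h.symm
  have hcomp : LinearMap.range (E : lp (fun _ : I => ℂ) 2 →ₗ[ℂ] lp (fun _ : I => ℂ) 2) = JorthCompanion (Pp - Pm) (LinearMap.ker (T : lp (fun _ : I => ℂ) 2 →ₗ[ℂ] H)) := by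
    apply le_antisymm
    · rintro _ ⟨x, rfl⟩
      intro s hs
      rw [ContinuousLinearMap.coe_coe, hEapp]
      exact hsub _ s hs
    · intro x hx
      exact ⟨x, hsup x hx⟩
  refine ⟨hidem, hEsa, hcomp, hrange, ?_⟩
  -- uniqueness
  intro E' hE'idem hE'sa hE'range
  have hE'fix : ∀ w, w ∈ LinearMap.range (E' : lp (fun _ : I => ℂ) 2 →ₗ[ℂ] lp (fun _ : I => ℂ) 2) → E' w = w := by
    rintro _ ⟨v, rfl⟩
    exact congrArg (· v) hE'idem
  have hEfix : ∀ w, w ∈ LinearMap.range (E : lp (fun _ : I => ℂ) 2 →ₗ[ℂ] lp (fun _ : I => ℂ) 2) → E w = w := by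
    rintro _ ⟨v, rfl⟩
    exact congrArg (· v) hidem
  have hre : LinearMap.range (E' : lp (fun _ : I => ℂ) 2 →ₗ[ℂ] lp (fun _ : I => ℂ) 2) = LinearMap.range (E : lp (fun _ : I => ℂ) 2 →ₗ[ℂ] lp (fun _ : I => ℂ) 2) := by rw [hE'range, hcomp]
  apply ContinuousLinearMap.ext
  intro x
  have key : ∀ z, kre (Pp - Pm) (E' x - E x) z = 0 := by
    intro z
    have h1 : kre (Pp - Pm) (E' x) z = kre (Pp - Pm) (E x) z := by
      calc kre (Pp - Pm) (E' x) z = kre (Pp - Pm) x (E' z) := hE'sa x z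
        _ = kre (Pp - Pm) x (E (E' z)) := by
            rw [hEfix _ (hre ▸ LinearMap.mem_range_self (E' : lp (fun _ : I => ℂ) 2 →ₗ[ℂ] lp (fun _ : I => ℂ) 2) z)]
        _ = kre (Pp - Pm) (E x) (E' z) := (hEsa x (E' z)).symm
        _ = kre (Pp - Pm) (E' (E x)) z := (hE'sa (E x) z).symm
        _ = kre (Pp - Pm) (E x) z := by
            rw [hE'fix _ (hre.symm ▸ LinearMap.mem_range_self (E : lp (fun _ : I => ℂ) 2 →ₗ[ℂ] lp (fun _ : I => ℂ) 2) x)]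
    unfold kre at h1 ⊢
    rw [map_sub, inner_sub_left, h1, sub_self]
  have := hnd _ key
  exact sub_eq_zero.mp this
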